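/- Let β be a Pisot number with finite Rényi expansion d_β(1) = t₁⋯t_ℓ, and let α be an algebraic conjugate of β. Then -1 = Σ_{i≥0} z_i α^i, where (z_i)_{i≥0} is the left-infinite purely periodic sequence reading ^ω(t₁⋯t_{ℓ-1}(t_ℓ - 1)); i.e., the α-value of the purely periodic left-infinite word with period t₁⋯t_{ℓ-1}(t_ℓ-1) equals -1. -/

import Mathlib

/-- The β-transformation T_β(x) = {βx}. -/
noncomputable def betaMap (β : ℝ) : ℝ → ℝ := fun x => Int.fract (β * x)

/-- The Rényi expansion of 1: renyi β n = t_{n+1} = ⌊β·T_β^n(1)⌋. -/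
noncomputable def renyi (β : ℝ) (n : ℕ) : ℤ := ⌊β * (betaMap β)^[n] 1⌋

/-- β is a Pisot number. -/
def IsPisot (β : ℝ) : Prop :=
  1 < β ∧ IsIntegral ℤ β ∧
    ∀ z : ℂ, Polynomial.aeval z (minpoly ℤ β) = 0 → z ≠ (β : ℂ) → ‖z‖ < 1

lemma iterate_succ_fract (β : ℝ) (n : ℕ) :
    (betaMap β)^[n + 1] 1 = β * (betaMap β)^[n] 1 - renyi β n := by
  rw [Function.iterate_succ_apply']
  show Int.fract (β * (betaMap β)^[n] 1) = _
  rw [Int.fract]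
  rfl

/-- The basic recursion: `β^n = ∑_{i<n} t_{i+1} β^{n-1-i} + T_β^n(1)`. -/
lemma renyi_recursion (β : ℝ) (n : ℕ) :
    β ^ n = (∑ i ∈ Finset.range n, (renyi β i : ℝ) * β ^ (n - 1 - i))
      + (betaMap β)^[n] 1 := by
  induction n with
  | zero => simp
  | succ n ih =>
    have hthis : β ^ (n + 1) = β * β ^ n := by ring
    have hpow : ∀ i ∈ Finset.range n,
        β * ((renyi β i : ℝ) * β ^ (n - 1 - i)) = (renyi β i : ℝ) * β ^ (n - i) := by
      intro i hi
      rw [Finset.mem_range] at hi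
      have : n - i = (n - 1 - i) + 1 := by omega
      rw [this, pow_succ]
      ring
    rw [hthis, ih, iterate_succ_fract, mul_add, Finset.mul_sum,
      Finset.sum_range_succ]
    simp only [Nat.add_sub_cancel, Nat.sub_self, pow_zero, mul_one]
    rw [Finset.sum_congr rfl hpow]
    ring

lemma iterate_eq_zero (β : ℝ) (hβ1 : 1 < β) (ℓ : ℕ) (hℓ : 0 < ℓ)
    (hfin : ∀ n, ℓ ≤ n → renyi β n = 0) : (betaMap β)^[ℓ] 1 = 0 := by
  set r : ℕ → ℝ := fun n => (betaMap β)^[n] 1 with hr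
  have hstep' : ∀ n, ℓ ≤ n → r (n + 1) = β * r n := by
    intro n hn
    show (betaMap β)^[n + 1] 1 = β * (betaMap β)^[n] 1
    rw [iterate_succ_fract, hfin n hn]
    simp
  have hgeo : ∀ k : ℕ, r (ℓ + k) = β ^ k * r ℓ := by
    intro k
    induction k with
    | zero => simp
    | succ k ih =>
      have : ℓ + (k + 1) = (ℓ + k) + 1 := by omega
      rw [this, hstep' (ℓ + k) (by omega), ih, pow_succ]
      ring
  have hlt1 : ∀ m : ℕ, r (m + 1) < 1 := by
    intro m
    show (betaMap β)^[m + 1] 1 < 1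
    rw [Function.iterate_succ_apply']
    exact Int.fract_lt_one _
  have hnonneg : 0 ≤ r ℓ := by
    obtain ⟨m, hm⟩ : ∃ m, ℓ = m + 1 := ⟨ℓ - 1, by omega⟩
    have : r ℓ = Int.fract (β * r m) := by
      simp only [hr, hm, Function.iterate_succ_apply', betaMap]
    rw [this]; exact Int.fract_nonneg _
  rcases eq_or_lt_of_le hnonneg with h | h
  · exact h.symm
  · exfalso
    obtain ⟨k, hk⟩ := pow_unbounded_of_one_lt ((r ℓ)⁻¹) hβ1
    have h1 : 1 < β ^ k * r ℓ := by
      have h2 := mul_lt_mul_of_pos_right hk h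
      rwa [inv_mul_cancel₀ (ne_of_gt h)] at h2
    have h2 : r (ℓ + k) < 1 := by
      obtain ⟨m, hm⟩ : ∃ m, ℓ + k = m + 1 := ⟨ℓ + k - 1, by omega⟩
      rw [hm]; exact hlt1 m
    rw [hgeo k] at h2
    linarith

/-- The key algebraic identity for a conjugate: `α^ℓ = ∑_{j<ℓ} t_{ℓ-j} α^j`. -/
lemma alpha_pow_eq (β : ℝ) (α : ℂ) (hβ : IsPisot β)
    (hroot : Polynomial.aeval α (minpoly ℤ β) = 0)
    (ℓ : ℕ) (hℓ : 0 < ℓ) (hfin : ∀ n, ℓ ≤ n → renyi β n = 0) :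
    α ^ ℓ = ∑ j ∈ Finset.range ℓ, (renyi β (ℓ - 1 - j) : ℂ) * α ^ j := by
  set P : Polynomial ℤ :=
    Polynomial.X ^ ℓ -
      ∑ i ∈ Finset.range ℓ, Polynomial.C (renyi β i) * Polynomial.X ^ (ℓ - 1 - i) with hP
  have hβP : Polynomial.aeval β P = 0 := by
    have h0 := renyi_recursion β ℓ
    rw [iterate_eq_zero β hβ.1 ℓ hℓ hfin, add_zero] at h0
    simp only [hP, map_sub, map_sum, map_mul, map_pow, Polynomial.aeval_X,
      Polynomial.aeval_C]
    rw [sub_eq_zero]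
    simpa using h0
  obtain ⟨q, hq⟩ := minpoly.isIntegrallyClosed_dvd hβ.2.1 hβP
  have hαP : Polynomial.aeval α P = 0 := by
    rw [hq, map_mul, hroot, zero_mul]
  have hαP' : α ^ ℓ = ∑ i ∈ Finset.range ℓ, (renyi β i : ℂ) * α ^ (ℓ - 1 - i) := by
    simp only [hP, map_sub, map_sum, map_mul, map_pow, Polynomial.aeval_X,
      Polynomial.aeval_C] at hαP
    rw [sub_eq_zero] at hαP
    simpa using hαP
  rw [hαP']
  rw [← Finset.sum_range_reflect (fun i => (renyi β (ℓ - 1 - i) : ℂ) * α ^ i) ℓ]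
  apply Finset.sum_congr rfl
  intro i hi
  rw [Finset.mem_range] at hi
  have hidx : ℓ - 1 - (ℓ - 1 - i) = i := by omega
  rw [hidx]

theorem neg_one_purely_periodic_expansion (β : ℝ) (α : ℂ)
    (hβ : IsPisot β)
    (hroot : Polynomial.aeval α (minpoly ℤ β) = 0) (hne : α ≠ (β : ℂ))
    (ℓ : ℕ) (hℓ : 0 < ℓ)
    (hlast : renyi β (ℓ - 1) ≠ 0) (hfin : ∀ n, ℓ ≤ n → renyi β n = 0) :
    HasSum
      (fun i : ℕ =>
        ((renyi β (ℓ - 1 - i % ℓ) - if i % ℓ = 0 then 1 else 0 : ℤ) : ℂ) * α ^ i)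
      (-1) := by
  have hαlt : ‖α‖ < 1 := hβ.2.2 α hroot hne
  have hnorm : ‖α ^ ℓ‖ < 1 := by
    rw [norm_pow]
    calc ‖α‖ ^ ℓ ≤ ‖α‖ ^ 1 := pow_le_pow_of_le_one (norm_nonneg _) hαlt.le hℓ
    _ = ‖α‖ := pow_one _
    _ < 1 := hαlt
  have hne1 : (1 : ℂ) - α ^ ℓ ≠ 0 := by
    intro h
    rw [sub_eq_zero] at h
    rw [← h] at hnorm
    simp at hnorm
  -- digit values
  set z : ℕ → ℂ := fun j => ((renyi β (ℓ - 1 - j) - if j = 0 then 1 else 0 : ℤ) : ℂ)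
    with hz
  -- the component functions
  set F : ℕ → ℕ → ℂ := fun j i => if j = i % ℓ then z j * α ^ i else 0 with hF
  -- each component has sum z j * α^j / (1 - α^ℓ)
  have hcomp : ∀ j ∈ Finset.range ℓ,
      HasSum (F j) (z j * α ^ j * (1 - α ^ ℓ)⁻¹) := by
    intro j hj
    rw [Finset.mem_range] at hj
    have hinj : Function.Injective (fun k : ℕ => ℓ * k + j) := by
      intro a b hab
      simp only at hab
      have : ℓ * a = ℓ * b := by omega
      exact Nat.eq_of_mul_eq_mul_left hℓ this
    have hsupp : ∀ i ∉ Set.range (fun k : ℕ => ℓ * k + j), F j i = 0 := by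
      intro i hi
      simp only [Set.range, Set.mem_setOf_eq, not_exists] at hi
      rw [hF]
      simp only
      rw [if_neg]
      intro hmod
      apply hi (i / ℓ)
      rw [hmod]
      exact Nat.div_add_mod i ℓ
    rw [← Function.Injective.hasSum_iff hinj hsupp]
    have hcomps : (F j) ∘ (fun k : ℕ => ℓ * k + j)
        = fun k => z j * α ^ j * (α ^ ℓ) ^ k := by
      funext k
      simp only [Function.comp_apply, hF]
      have hj' : j = (ℓ * k + j) % ℓ := by
        rw [Nat.mul_add_mod, Nat.mod_eq_of_lt hj]
      rw [if_pos hj', pow_add, ← pow_mul]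
      ring
    rw [hcomps]
    exact (hasSum_geometric_of_norm_lt_one hnorm).mul_left _
  have hsummed := hasSum_sum hcomp
  -- the pointwise sum of the components is the target function
  have hpt : (fun i => ∑ j ∈ Finset.range ℓ, F j i)
      = fun i : ℕ =>
        ((renyi β (ℓ - 1 - i % ℓ) - if i % ℓ = 0 then 1 else 0 : ℤ) : ℂ) * α ^ i := by
    funext i
    have hmem : i % ℓ ∈ Finset.range ℓ := Finset.mem_range.mpr (Nat.mod_lt _ hℓ)
    simp only [hF]
    rw [Finset.sum_ite_eq' (Finset.range ℓ) (i % ℓ) (fun j => z j * α ^ i),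
      if_pos hmem]
  -- the total
  have htot : (∑ j ∈ Finset.range ℓ, z j * α ^ j * (1 - α ^ ℓ)⁻¹) = -1 := by
    rw [← Finset.sum_mul]
    have hsplit : ∀ j ∈ Finset.range ℓ, z j * α ^ j
        = (renyi β (ℓ - 1 - j) : ℂ) * α ^ j - (if j = 0 then 1 else 0) * α ^ j := by
      intro j hj
      simp only [hz]
      push_cast
      split <;> push_cast <;> ring
    have hone : (∑ j ∈ Finset.range ℓ, (if j = 0 then (1 : ℂ) else 0) * α ^ j) = 1 := by
      rw [Finset.sum_eq_single 0]
      · simp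
      · intro b _ hb; simp [hb]
      · intro h; exact absurd (Finset.mem_range.mpr hℓ) h
    have hsum : (∑ j ∈ Finset.range ℓ, z j * α ^ j) = α ^ ℓ - 1 := by
      rw [Finset.sum_congr rfl hsplit, Finset.sum_sub_distrib,
        ← alpha_pow_eq β α hβ hroot ℓ hℓ hfin, hone]
    rw [hsum]
    field_simp
    ring
  rw [← hpt, ← htot]
  exact hsummed
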